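/- Let u, w : [0,T] → ℝ solve the Riccati equations u' - B·u² - 2A_u·u + C_u = 0, u(T) = D_u, and w' - B·w² - 2A_w·w + C_w = 0, w(T) = D_w, with A_u ≠ A_w. If u(t) = w(t) for all t ∈ [0,T], then u and w are constant, with common value (C_u - C_w)/(2(A_u - A_w)), and moreover B·D² + 2A_u·D - C_u = 0 and B·D² + 2A_w·D - C_w = 0 where D = D_u = D_w. -/

import Mathlib

open Real Set

theorem stmt_9 (T B Au Aw Cu Cw Du Dw : ℝ) (hT : 0 < T) (hA : Au ≠ Aw)
    (u w : ℝ → ℝ)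
    (hu : ∀ t ∈ Icc (0 : ℝ) T, HasDerivAt u (B * u t ^ 2 + 2 * Au * u t - Cu) t)
    (huT : u T = Du)
    (hw : ∀ t ∈ Icc (0 : ℝ) T, HasDerivAt w (B * w t ^ 2 + 2 * Aw * w t - Cw) t)
    (hwT : w T = Dw)
    (heq : ∀ t ∈ Icc (0 : ℝ) T, u t = w t) :
    (∀ t ∈ Icc (0 : ℝ) T, u t = (Cu - Cw) / (2 * (Au - Aw))) ∧
    Du = Dw ∧
    B * Du ^ 2 + 2 * Au * Du - Cu = 0 ∧
    B * Du ^ 2 + 2 * Aw * Du - Cw = 0 := by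
  set D : ℝ := (Cu - Cw) / (2 * (Au - Aw)) with hD
  have hAA : Au - Aw ≠ 0 := sub_ne_zero.mpr hA
  -- interior equality
  have hioo : ∀ t ∈ Ioo (0 : ℝ) T, u t = D := by
    intro t ht
    have hmem : t ∈ Icc (0 : ℝ) T := Ioo_subset_Icc_self ht
    have hnhds : Ioo (0 : ℝ) T ∈ nhds t := Ioo_mem_nhds ht.1 ht.2
    have hev : u =ᶠ[nhds t] w :=
      Filter.eventually_of_mem hnhds fun s hs => heq s (Ioo_subset_Icc_self hs)
    have h1 : HasDerivAt u (B * w t ^ 2 + 2 * Aw * w t - Cw) t :=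
      (hw t hmem).congr_of_eventuallyEq hev
    have h2 := (hu t hmem).unique h1
    have huw : u t = w t := heq t hmem
    rw [← huw] at h2
    have : 2 * (Au - Aw) * u t = Cu - Cw := by ring_nf; ring_nf at h2; linarith
    rw [hD, eq_div_iff (mul_ne_zero two_ne_zero hAA)]
    linarith
  -- continuity on Icc
  have hcont : ∀ t ∈ Icc (0 : ℝ) T, ContinuousAt u t := fun t ht => (hu t ht).continuousAt
  -- extend to closed interval
  have hicc : ∀ t ∈ Icc (0 : ℝ) T, u t = D := by
    intro t ht
    rcases eq_or_lt_of_le ht.1 with h0 | h0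
    · -- t = 0
      subst h0
      have h1 : Filter.Tendsto u (nhdsWithin 0 (Ioo (0:ℝ) T)) (nhds (u 0)) :=
        (hcont 0 ht).continuousWithinAt.mono (fun s hs => trivial)
      have h2 : Filter.Tendsto u (nhdsWithin 0 (Ioo (0:ℝ) T)) (nhds D) := by
        refine Filter.Tendsto.congr' ?_ tendsto_const_nhds
        filter_upwards [self_mem_nhdsWithin] with s hs
        exact (hioo s hs).symm
      have hne : (nhdsWithin (0:ℝ) (Ioo 0 T)).NeBot := by
        refine mem_closure_iff_nhdsWithin_neBot.mp ?_
        rw [closure_Ioo hT.ne]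
        exact ⟨le_refl 0, hT.le⟩
      exact tendsto_nhds_unique h1 h2
    rcases eq_or_lt_of_le ht.2 with hTt | hTt
    · -- t = T
      subst hTt
      have h1 : Filter.Tendsto u (nhdsWithin t (Ioo (0:ℝ) t)) (nhds (u t)) :=
        (hcont t ht).continuousWithinAt.mono (fun s hs => trivial)
      have h2 : Filter.Tendsto u (nhdsWithin t (Ioo (0:ℝ) t)) (nhds D) := by
        refine Filter.Tendsto.congr' ?_ tendsto_const_nhds
        filter_upwards [self_mem_nhdsWithin] with s hs
        exact (hioo s hs).symm
      have hne : (nhdsWithin t (Ioo (0:ℝ) t)).NeBot := by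
        refine mem_closure_iff_nhdsWithin_neBot.mp ?_
        rw [closure_Ioo hT.ne]
        exact ⟨hT.le, le_refl t⟩
      exact tendsto_nhds_unique h1 h2
    · exact hioo t ⟨h0, hTt⟩
  -- derivative zero at midpoint
  have hmid : T / 2 ∈ Ioo (0 : ℝ) T := ⟨by linarith, by linarith⟩
  have hmidI : T / 2 ∈ Icc (0 : ℝ) T := Ioo_subset_Icc_self hmid
  have hnhds : Ioo (0 : ℝ) T ∈ nhds (T / 2) := Ioo_mem_nhds hmid.1 hmid.2
  have hconst : HasDerivAt u 0 (T / 2) := by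
    have : u =ᶠ[nhds (T / 2)] fun _ => D :=
      Filter.eventually_of_mem hnhds fun s hs => hioo s hs
    exact (hasDerivAt_const (T / 2) D).congr_of_eventuallyEq this
  have hu0 : B * u (T/2) ^ 2 + 2 * Au * u (T/2) - Cu = 0 := (hu _ hmidI).unique hconst
  have hwconst : HasDerivAt w 0 (T / 2) := by
    have : w =ᶠ[nhds (T / 2)] fun _ => D := by
      refine Filter.eventually_of_mem hnhds fun s hs => ?_
      rw [← heq s (Ioo_subset_Icc_self hs)]; exact hioo s hs
    exact (hasDerivAt_const (T / 2) D).congr_of_eventuallyEq this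
  have hw0 : B * w (T/2) ^ 2 + 2 * Aw * w (T/2) - Cw = 0 := (hw _ hmidI).unique hwconst
  have huD : u (T/2) = D := hicc _ hmidI
  have hwD : w (T/2) = D := by rw [← heq _ hmidI]; exact huD
  have hTmem : T ∈ Icc (0 : ℝ) T := ⟨hT.le, le_refl T⟩
  have hDuD : Du = D := by rw [← huT]; exact hicc T hTmem
  have hDwD : Dw = D := by rw [← hwT, ← heq T hTmem, huT, hDuD]
  refine ⟨hicc, hDuD.trans hDwD.symm, ?_, ?_⟩
  · rw [hDuD, ← huD]; exact hu0
  · rw [hDuD, ← hwD]; exact hw0
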